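/- arXiv:2203.06842 — 2 statements merged into one kernel-verified Lean document; each statement's English description precedes it below -/
import Mathlib

section
/- Let x ∈ 𝔹 with F(x) ≠ 0 (i.e. x is not a Z-eigenvector of A), let B : E → E be a symmetric positive definite linear map, and set d := −B⁻¹ F(x). Then ⟪A x^{m-1}, P_x d⟫ = −⟪F(x), B⁻¹ F(x)⟫ < 0; consequently, for every σ ∈ (0,1) there exists ᾱ > 0 such that φ(x(α)) ≤ φ(x) − σ α ⟪F(x), B⁻¹ F(x)⟫ < φ(x) for all α ∈ (0, ᾱ], so d is a curve descent direction of φ at x. -/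
open scoped RealInnerProductSpace

noncomputable section

/-- Euclidean space `ℝ^n`. -/
abbrev Euc (n : ℕ) : Type := EuclideanSpace ℝ (Fin n)

/-- An `m`-th order tensor on `ℝ^n`, viewed as a continuous `m`-multilinear form. -/
abbrev Tensor (m n : ℕ) : Type := ContinuousMultilinearMap ℝ (fun _ : Fin m => Euc n) ℝ

/-- A tensor is symmetric if it is invariant under every permutation of its arguments. -/
def IsSymmTensor {m n : ℕ} (A : Tensor m n) : Prop :=
  ∀ (e : Equiv.Perm (Fin m)) (v : Fin m → Euc n), A (v ∘ e) = A v

/-- `A x^m`, the homogeneous form `A (x, …, x)`. -/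
def tpow {m n : ℕ} (A : Tensor m n) (x : Euc n) : ℝ := A (fun _ => x)

/-- The last index of `Fin m`. -/
def lastIdx {m : ℕ} (_hm : 2 ≤ m) : Fin m := ⟨m - 1, by omega⟩

/-- The second to last index of `Fin m`. -/
def sndIdx {m : ℕ} (_hm : 2 ≤ m) : Fin m := ⟨m - 2, by omega⟩

lemma sndIdx_ne_lastIdx {m : ℕ} (hm : 2 ≤ m) : sndIdx hm ≠ lastIdx hm := by
  simp only [sndIdx, lastIdx, Fin.mk.injEq, ne_eq]
  omega

/-- `A x^{m-1}`: the unique vector with `⟪A x^{m-1}, v⟫ = A (x, …, x, v)` for all `v`. -/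
def tvec {m n : ℕ} (A : Tensor m n) (hm : 2 ≤ m) (x : Euc n) : Euc n :=
  (InnerProductSpace.toDual ℝ (Euc n)).symm
    (A.toContinuousLinearMap (fun _ => x) (lastIdx hm))

/-- `F(x) = A x^{m-1} - (A x^m) • x`. -/
def Fvec {m n : ℕ} (A : Tensor m n) (hm : 2 ≤ m) (x : Euc n) : Euc n :=
  tvec A hm x - tpow A x • x

/-- `φ(x) = (1/m) A x^m`. -/
def phi {m n : ℕ} (A : Tensor m n) (x : Euc n) : ℝ := (1 / (m : ℝ)) * tpow A x

/-- Orthogonal projection `P_x d = d - ⟪x, d⟫ x` (for `x` a unit vector). -/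
def Pproj {n : ℕ} (x d : Euc n) : Euc n := d - ⟪x, d⟫ • x

/-- `x(α) = (x + α d)/‖x + α d‖`, the projection of `x + α d` onto the unit sphere. -/
def xcur {n : ℕ} (x d : Euc n) (α : ℝ) : Euc n := ‖x + α • d‖⁻¹ • (x + α • d)

/-- `w(x, d)`: the unique vector with `⟪w(x, d), v⟫ = A (x, …, x, d, v)` for all `v`. -/
def wvec {m n : ℕ} (A : Tensor m n) (hm : 2 ≤ m) (x d : Euc n) : Euc n :=
  (InnerProductSpace.toDual ℝ (Euc n)).symm
    (A.toContinuousLinearMap (Function.update (fun _ => x) (sndIdx hm) d) (lastIdx hm))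

/-- `A (x, …, x, d, d)`. -/
def A2 {m n : ℕ} (A : Tensor m n) (hm : 2 ≤ m) (x d : Euc n) : ℝ :=
  A (Function.update (Function.update (fun _ => x) (sndIdx hm) d) (lastIdx hm) d)

lemma wvec_add {m n : ℕ} (A : Tensor m n) (hm : 2 ≤ m) (x d₁ d₂ : Euc n) :
    wvec A hm x (d₁ + d₂) = wvec A hm x d₁ + wvec A hm x d₂ := by
  unfold wvec
  rw [← map_add]
  congr 1
  ext v
  simp only [ContinuousMultilinearMap.toContinuousLinearMap_apply, ContinuousLinearMap.add_apply]
  rw [Function.update_comm (sndIdx_ne_lastIdx hm), Function.update_comm (sndIdx_ne_lastIdx hm),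
    Function.update_comm (sndIdx_ne_lastIdx hm)]
  exact A.map_update_add _ _ _ _

lemma wvec_smul {m n : ℕ} (A : Tensor m n) (hm : 2 ≤ m) (x : Euc n) (c : ℝ) (d : Euc n) :
    wvec A hm x (c • d) = c • wvec A hm x d := by
  unfold wvec
  rw [← map_smul]
  congr 1
  ext v
  simp only [ContinuousMultilinearMap.toContinuousLinearMap_apply,
    ContinuousLinearMap.smul_apply, smul_eq_mul]
  rw [Function.update_comm (sndIdx_ne_lastIdx hm), Function.update_comm (sndIdx_ne_lastIdx hm)]
  exact A.map_update_smul _ _ _ _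

/-- The Jacobian `F'(x) d = (m-1) w(x,d) - (A x^m) d - m ⟪A x^{m-1}, d⟫ x`. -/
def FderivL {m n : ℕ} (A : Tensor m n) (hm : 2 ≤ m) (x : Euc n) : Euc n →L[ℝ] Euc n :=
  LinearMap.toContinuousLinearMap
  { toFun := fun d =>
      ((m : ℝ) - 1) • wvec A hm x d - tpow A x • d - ((m : ℝ) * ⟪tvec A hm x, d⟫) • x
    map_add' := by
      intro d₁ d₂
      try simp only
      rw [wvec_add, inner_add_right]
      module
    map_smul' := by
      intro c d
      simp only [RingHom.id_apply]
      rw [wvec_smul, inner_smul_right]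
      module }

/-- A Newton direction at `x`: `⟪x, d⟫ = 0` and `P_x (F'(x) d + F(x)) = 0`. -/
def NewtonDir {m n : ℕ} (A : Tensor m n) (hm : 2 ≤ m) (x d : Euc n) : Prop :=
  ⟪x, d⟫ = 0 ∧ Pproj x (FderivL A hm x d + Fvec A hm x) = 0

/-- The residual function `θ(x) = (1/2)‖F(x)‖²`. -/
def theta {m n : ℕ} (A : Tensor m n) (hm : 2 ≤ m) (x : Euc n) : ℝ :=
  (1 / 2) * ‖Fvec A hm x‖ ^ 2

/-- Assumption (A): second-order sufficient condition at the KKT point `x̄`. -/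
def AssumpA {m n : ℕ} (A : Tensor m n) (hm : 2 ≤ m) (xb : Euc n) (lam : ℝ) : Prop :=
  ‖xb‖ = 1 ∧ tvec A hm xb = lam • xb ∧ lam = tpow A xb ∧
    ∀ d : Euc n, d ≠ 0 → ⟪xb, d⟫ = 0 →
      0 < ((m : ℝ) - 1) * A2 A hm xb d - lam * ‖d‖ ^ 2

end

lemma inner_tvec {m n : ℕ} (A : Tensor m n) (hm : 2 ≤ m) (x v : Euc n) :
    ⟪tvec A hm x, v⟫ = A (Function.update (fun _ => x) (lastIdx hm) v) := by
  simp [tvec, InnerProductSpace.toDual_symm_apply]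

lemma inner_tvec_self {m n : ℕ} (A : Tensor m n) (hm : 2 ≤ m) (x : Euc n) :
    ⟪tvec A hm x, x⟫ = tpow A x := by
  rw [inner_tvec]
  have : Function.update (fun _ : Fin m => x) (lastIdx hm) x = fun _ => x :=
    Function.update_eq_self _ _
  rw [this]; rfl

lemma symm_update {m n : ℕ} (A : Tensor m n) (hA : IsSymmTensor A) (hm : 2 ≤ m)
    (x v : Euc n) (i : Fin m) :
    A (Function.update (fun _ => x) i v) = ⟪tvec A hm x, v⟫ := by
  rw [inner_tvec]
  rcases eq_or_ne i (lastIdx hm) with h | h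
  · rw [h]
  · have := hA (Equiv.swap i (lastIdx hm)) (Function.update (fun _ => x) (lastIdx hm) v)
    rw [← this]
    congr 1
    funext j
    simp only [Function.comp_apply]
    rcases eq_or_ne j i with rfl | hj
    · rw [Function.update_self, Equiv.swap_apply_left, Function.update_self]
    rcases eq_or_ne j (lastIdx hm) with rfl | hj'
    · rw [Function.update_of_ne hj, Equiv.swap_apply_right, Function.update_of_ne h]
    · rw [Function.update_of_ne hj, Equiv.swap_apply_of_ne_of_ne hj hj',
        Function.update_of_ne hj']

lemma hasDerivAt_phi_curve {m n : ℕ} (A : Tensor m n) (hA : IsSymmTensor A) (hm : 2 ≤ m)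
    (x d : Euc n) (hx : ‖x‖ = 1) :
    HasDerivAt (fun α => phi A (xcur x d α)) ⟪tvec A hm x, Pproj x d⟫ 0 := by
  have hm0 : (m : ℝ) ≠ 0 := by positivity
  -- the curve y α = x + α • d
  have hy : HasDerivAt (fun α : ℝ => x + α • d) d 0 := by
    simpa using ((hasDerivAt_id (0:ℝ)).smul_const d).const_add x
  have hy0 : x + (0:ℝ) • d = x := by simp
  -- q α = ⟪y α, y α⟫ has derivative 2⟪x,d⟫ at 0
  have hq : HasDerivAt (fun α : ℝ => ⟪x + α • d, x + α • d⟫) (2 * ⟪x, d⟫) 0 := by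
    have := HasDerivAt.inner ℝ hy hy
    rw [hy0] at this
    refine this.congr_deriv ?_
    rw [real_inner_comm d x]; ring
  have hq0 : ⟪x + (0:ℝ) • d, x + (0:ℝ) • d⟫ = 1 := by
    rw [hy0, real_inner_self_eq_norm_sq, hx]; norm_num
  -- s α = ‖y α‖ has derivative ⟪x,d⟫ at 0
  have hs : HasDerivAt (fun α : ℝ => ‖x + α • d‖) ⟪x, d⟫ 0 := by
    have h1 : HasDerivAt (fun α : ℝ => Real.sqrt ⟪x + α • d, x + α • d⟫)
        ((1 / (2 * Real.sqrt ⟪x + (0:ℝ) • d, x + (0:ℝ) • d⟫)) * (2 * ⟪x, d⟫)) 0 := by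
      exact (Real.hasDerivAt_sqrt (by rw [hq0]; norm_num)).comp 0 hq
    have heq : (fun α : ℝ => Real.sqrt ⟪x + α • d, x + α • d⟫) = fun α => ‖x + α • d‖ := by
      funext α
      rw [real_inner_self_eq_norm_sq, Real.sqrt_sq (norm_nonneg _)]
    rw [heq] at h1
    convert h1 using 1
    rw [hq0, Real.sqrt_one]
    ring
  -- inverse norm
  have hsinv : HasDerivAt (fun α : ℝ => ‖x + α • d‖⁻¹) (-⟪x, d⟫) 0 := by
    have := hs.inv (by rw [hy0, hx]; norm_num)
    refine this.congr_deriv ?_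
    rw [hy0, hx]; norm_num
  -- curve derivative
  have hc : HasDerivAt (xcur x d) (Pproj x d) 0 := by
    have := hsinv.smul hy
    rw [hy0, hx] at this
    simp only [norm_one, inv_one, one_smul] at this
    refine this.congr_deriv ?_
    unfold Pproj
    module
  have hc0 : xcur x d 0 = x := by simp [xcur, hx]
  -- tpow along curve
  have hD : HasFDerivAt (fun y : Euc n => tpow A y)
      ((A.linearDeriv (fun _ => x)).comp
        (ContinuousLinearMap.pi (fun _ : Fin m => ContinuousLinearMap.id ℝ (Euc n)))) x := by
    exact (A.hasFDerivAt (fun _ => x)).comp x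
      (ContinuousLinearMap.pi fun _ : Fin m => ContinuousLinearMap.id ℝ (Euc n)).hasFDerivAt
  have htp : HasDerivAt (fun α => tpow A (xcur x d α))
      ((m : ℝ) * ⟪tvec A hm x, Pproj x d⟫) 0 := by
    rw [← hc0] at hD
    have := hD.comp_hasDerivAt 0 hc
    refine this.congr_deriv ?_
    symm
    simp only [ContinuousLinearMap.coe_comp', Function.comp_apply,
      ContinuousLinearMap.pi_apply, ContinuousLinearMap.id_apply,
      ContinuousMultilinearMap.linearDeriv_apply, hc0]
    rw [Finset.sum_congr rfl (fun i _ => symm_update A hA hm x (Pproj x d) i)]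
    simp [mul_comm]
  have h2 : (1:ℝ)/(m:ℝ) * ((m:ℝ) * ⟪tvec A hm x, Pproj x d⟫) = ⟪tvec A hm x, Pproj x d⟫ := by
    field_simp
  have := htp.const_mul (1 / (m : ℝ))
  rw [h2] at this
  exact this

/-- for a symmetric positive definite `B` and `d = -B⁻¹ F(x)` at a non-eigenvector
`x`, one has `⟪A x^{m-1}, P_x d⟫ = -⟪F(x), B⁻¹ F(x)⟫ < 0`, and `d` is a curve descent
direction of `φ` at `x` satisfying the Armijo-type inequality for small `α`. -/
theorem stmt3 {m n : ℕ} (hn : 1 ≤ n) (hm : 2 ≤ m) (A : Tensor m n) (hA : IsSymmTensor A)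
    (x : Euc n) (hx : ‖x‖ = 1) (hFx : Fvec A hm x ≠ 0)
    (B : Euc n →L[ℝ] Euc n) (hBsa : IsSelfAdjoint B)
    (hBpd : ∀ v : Euc n, v ≠ 0 → 0 < ⟪v, B v⟫)
    (Binv : Euc n →L[ℝ] Euc n) (hBinv : ∀ v, B (Binv v) = v) (hBinv' : ∀ v, Binv (B v) = v)
    (d : Euc n) (hd : d = -(Binv (Fvec A hm x))) :
    ⟪tvec A hm x, Pproj x d⟫ = -⟪Fvec A hm x, Binv (Fvec A hm x)⟫ ∧
    ⟪tvec A hm x, Pproj x d⟫ < 0 ∧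
    ∀ σ ∈ Set.Ioo (0 : ℝ) 1, ∃ αbar > 0, ∀ α ∈ Set.Ioc (0 : ℝ) αbar,
      phi A (xcur x d α) ≤ phi A x - σ * α * ⟪Fvec A hm x, Binv (Fvec A hm x)⟫ ∧
      phi A (xcur x d α) < phi A x := by
  have h1 : ⟪tvec A hm x, Pproj x d⟫ = ⟪Fvec A hm x, d⟫ := by
    rw [Pproj, Fvec, inner_sub_right, inner_sub_left, real_inner_smul_right,
      real_inner_smul_left, inner_tvec_self A hm x]
    ring
  have h2 : ⟪Fvec A hm x, d⟫ = -⟪Fvec A hm x, Binv (Fvec A hm x)⟫ := by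
    rw [hd, inner_neg_right]
  have hu : Binv (Fvec A hm x) ≠ 0 := by
    intro h0
    apply hFx
    rw [← hBinv (Fvec A hm x), h0, map_zero]
  have hkey : ⟪Fvec A hm x, Binv (Fvec A hm x)⟫
      = ⟪Binv (Fvec A hm x), B (Binv (Fvec A hm x))⟫ := by
    rw [hBinv (Fvec A hm x)]
    exact real_inner_comm _ _
  have hcpos : 0 < ⟪Fvec A hm x, Binv (Fvec A hm x)⟫ := by
    rw [hkey]; exact hBpd _ hu
  have heq : ⟪tvec A hm x, Pproj x d⟫ = -⟪Fvec A hm x, Binv (Fvec A hm x)⟫ := h1.trans h2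
  refine ⟨heq, by rw [heq]; linarith, ?_⟩
  intro σ hσ
  -- derivative of φ along the curve
  have hg : HasDerivAt (fun α => phi A (xcur x d α))
      (-⟪Fvec A hm x, Binv (Fvec A hm x)⟫) 0 := by
    rw [← heq]
    exact hasDerivAt_phi_curve A hA hm x d hx
  have hg0 : phi A (xcur x d 0) = phi A x := by
    simp [xcur, hx]
  set c : ℝ := ⟪Fvec A hm x, Binv (Fvec A hm x)⟫ with hc
  have hslope := hasDerivAt_iff_tendsto_slope.mp hg
  have hslope' : Filter.Tendsto (slope (fun α => phi A (xcur x d α)) 0)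
      (nhdsWithin 0 (Set.Ioi 0)) (nhds (-c)) :=
    hslope.mono_left (nhdsWithin_mono 0 (fun a ha => ne_of_gt ha))
  have hlt : -c < -(σ * c) := by nlinarith [hσ.1, hσ.2, hcpos]
  have hev : ∀ᶠ α in nhdsWithin 0 (Set.Ioi 0),
      slope (fun α => phi A (xcur x d α)) 0 α < -(σ * c) :=
    hslope'.eventually_lt_const hlt
  rw [Filter.eventually_iff, mem_nhdsGT_iff_exists_Ioc_subset] at hev
  obtain ⟨αbar, hαbar, hsub⟩ := hev
  refine ⟨αbar, hαbar, ?_⟩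
  intro α hα
  have hs := hsub hα
  have hα0 : 0 < α := hα.1
  rw [Set.mem_setOf_eq, slope_def_field] at hs
  have hs' : (phi A (xcur x d α) - phi A (xcur x d 0)) / α < -(σ * c) := by
    simpa using hs
  rw [div_lt_iff₀ hα0] at hs'
  rw [hg0] at hs'
  constructor
  · nlinarith
  · nlinarith [mul_pos (mul_pos hσ.1 hα0) hcpos]
end

section
/- Under Assumption (A), the linear map E → E × ℝ given by d ↦ (P_{x̄}(F′(x̄) d), ⟪x̄, d⟫) is injective (equivalently, bijective). -/
open scoped RealInnerProductSpace

lemma inner_wvec {m n : ℕ} (A : Tensor m n) (hm : 2 ≤ m) (x d v : Euc n) :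
    ⟪wvec A hm x d, v⟫ =
      A (Function.update (Function.update (fun _ => x) (sndIdx hm) d) (lastIdx hm) v) := by
  unfold wvec
  rw [InnerProductSpace.toDual_symm_apply]
  simp [ContinuousMultilinearMap.toContinuousLinearMap_apply]

lemma key {m n : ℕ} (hm : 2 ≤ m) (A : Tensor m n)
    (xb : Euc n) (lam : ℝ) (hAss : AssumpA A hm xb lam)
    (d : Euc n) (hperp : ⟪xb, d⟫ = 0) (hP : Pproj xb (FderivL A hm xb d) = 0) : d = 0 := by
  by_contra hd
  have hpos := hAss.2.2.2 d hd hperp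
  have htv : tvec A hm xb = lam • xb := hAss.2.1
  have htp : tpow A xb = lam := hAss.2.2.1.symm
  set X := FderivL A hm xb d with hX
  have hXeq : X = ⟪xb, X⟫ • xb := by
    have h := hP
    unfold Pproj at h
    exact sub_eq_zero.mp h
  have hXd : ⟪X, d⟫ = 0 := by
    rw [hXeq, real_inner_smul_left, hperp, mul_zero]
  have hXd' : ⟪X, d⟫ = ((m : ℝ) - 1) * A2 A hm xb d - lam * ‖d‖ ^ 2 := by
    have hXval : X = ((m : ℝ) - 1) • wvec A hm xb d - tpow A xb • d
        - ((m : ℝ) * ⟪tvec A hm xb, d⟫) • xb := rfl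
    rw [hXval, inner_sub_left, inner_sub_left, real_inner_smul_left, real_inner_smul_left,
      real_inner_smul_left, inner_wvec, htp, htv, real_inner_smul_left, hperp,
      real_inner_self_eq_norm_sq]
    simp [A2]
    try ring
  rw [hXd'] at hXd
  linarith

/-- under Assumption (A), the linear map `d ↦ (P_x̄ (F'(x̄) d), ⟪x̄, d⟫)`
is injective. -/
theorem stmt6 {m n : ℕ} (hn : 1 ≤ n) (hm : 2 ≤ m) (A : Tensor m n) (hA : IsSymmTensor A)
    (xb : Euc n) (lam : ℝ) (hAss : AssumpA A hm xb lam) :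
    Function.Injective (fun d : Euc n => (Pproj xb (FderivL A hm xb d), ⟪xb, d⟫)) := by
  intro d₁ d₂ h
  simp only [Prod.mk.injEq] at h
  obtain ⟨h1, h2⟩ := h
  have hperp : ⟪xb, d₁ - d₂⟫ = 0 := by rw [inner_sub_right, h2, sub_self]
  have hP : Pproj xb (FderivL A hm xb (d₁ - d₂)) = 0 := by
    rw [map_sub]
    unfold Pproj at h1 ⊢
    rw [inner_sub_right]
    linear_combination (norm := module) h1
  have := key hm A xb lam hAss (d₁ - d₂) hperp hP
  exact sub_eq_zero.mp this
end
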